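/- The regular wreath product W = C_p ≀ C_p (p odd) is not p-central of height p−1: there exists an element of order p in W not lying in ζ_{p−1}(W). -/

import Mathlib

/-- `Omega p i G` is the subgroup of `G` generated by all elements of order dividing `p^i`. -/
def Omega (p i : ℕ) (G : Type*) [Group G] : Subgroup G :=
  Subgroup.closure {x : G | x ^ p ^ i = 1}

variable (p : ℕ)

/-- The cyclic-shift automorphism of `(C_p)^p = ZMod p → Multiplicative (ZMod p)`. -/
def shiftAut (c : ZMod p) : MulAut (ZMod p → Multiplicative (ZMod p)) where
  toFun f := fun i => f (i + c)
  invFun f := fun i => f (i - c)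
  left_inv f := by funext i; simp
  right_inv f := by funext i; simp
  map_mul' f g := rfl

/-- The action of the top `C_p` on the base `(C_p)^p` by cyclic shifts. -/
def shiftHom : Multiplicative (ZMod p) →* MulAut (ZMod p → Multiplicative (ZMod p)) where
  toFun c := shiftAut p c.toAdd
  map_one' := by
    ext f i
    simp [shiftAut]
  map_mul' c d := by
    ext f i
    simp [shiftAut, add_comm, add_assoc, add_left_comm]

/-- The regular wreath product `C_p ≀ C_p`. -/
def WreathCpCp : Type :=
  (ZMod p → Multiplicative (ZMod p)) ⋊[shiftHom p] Multiplicative (ZMod p)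

instance : Group (WreathCpCp p) := by unfold WreathCpCp; infer_instance

section Aux
open fwdDiff

abbrev Wsd := (ZMod p → Multiplicative (ZMod p)) ⋊[shiftHom p] Multiplicative (ZMod p)

/-- multiplicative (inverse) difference operator on the base group -/
def Dg (f : ZMod p → Multiplicative (ZMod p)) : ZMod p → Multiplicative (ZMod p) :=
  fun i => f i * (f (i + 1))⁻¹

open SemidirectProduct in
lemma comm_sd (f : ZMod p → Multiplicative (ZMod p)) :
    (inl f : Wsd p) * inr (Multiplicative.ofAdd (1 : ZMod p)) * (inl f)⁻¹ *
      (inr (Multiplicative.ofAdd (1 : ZMod p)))⁻¹ = inl (Dg p f) := by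
  ext i
  · simp [SemidirectProduct.mul_left, SemidirectProduct.inv_left]
    simp [Dg, shiftHom, shiftAut]
  · simp

open SemidirectProduct in
lemma central_iter (n : ℕ) (f : ZMod p → Multiplicative (ZMod p))
    (h : (inl f : Wsd p) ∈ upperCentralSeries (Wsd p) n) :
    (Dg p)^[n] f = 1 := by
  induction n generalizing f with
  | zero =>
    rw [upperCentralSeries, Subgroup.upperCentralSeries_zero, Subgroup.mem_bot] at h
    have hf : f = 1 := by
      have := congrArg SemidirectProduct.left h
      simpa using this
    simpa using hf
  | succ n ih =>
    have h' := (mem_upperCentralSeries_succ_iff).mp h (inr (Multiplicative.ofAdd (1 : ZMod p)))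
    rw [commutatorElement_def, comm_sd] at h'
    rw [Function.iterate_succ_apply]
    exact ih _ h'

open fwdDiff in
lemma Dg_iterate_toAdd (n : ℕ) (f : ZMod p → Multiplicative (ZMod p)) :
    (fun j => Multiplicative.toAdd ((Dg p)^[n] f j)) =
      ((-1 : ℤ) ^ n) • (Δ_[(1 : ZMod p)])^[n] (fun j => Multiplicative.toAdd (f j)) := by
  induction n generalizing f with
  | zero => simp
  | succ n ih =>
    rw [Function.iterate_succ_apply, ih]
    have step : (fun j => Multiplicative.toAdd (Dg p f j)) =
        (-1 : ℤ) • (Δ_[(1 : ZMod p)] (fun j => Multiplicative.toAdd (f j))) := by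
      funext j
      simp [Dg, fwdDiff, sub_eq_add_neg]
      abel
    rw [step, fwdDiff_iter_const_smul, smul_smul, ← Function.iterate_succ_apply, pow_succ]

open SemidirectProduct in
lemma key (hp : p.Prime) (hodd : Odd p) :
    ¬ Omega p 1 (Wsd p) ≤ upperCentralSeries (Wsd p) (p - 1) := by
  haveI : Fact p.Prime := ⟨hp⟩
  intro hle
  set δ : ZMod p → Multiplicative (ZMod p) :=
    fun i => Multiplicative.ofAdd (if i = 0 then (1 : ZMod p) else 0) with hδ
  have ha : (inl δ : Wsd p) ∈ Omega p 1 (Wsd p) := by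
    apply Subgroup.subset_closure
    show (inl δ : Wsd p) ^ p ^ 1 = 1
    rw [pow_one, ← map_pow]
    have hδp : δ ^ p = 1 := by
      funext i
      show (δ i) ^ p = 1
      rw [hδ, ← ofAdd_nsmul]
      simp [nsmul_eq_mul, ZMod.natCast_self]
    rw [hδp, map_one]
  have hiter := central_iter p (p - 1) δ (hle ha)
  -- translate to additive
  have h0 : ((-1 : ℤ) ^ (p-1)) •
      (fwdDiff (1 : ZMod p))^[p-1] (fun j => Multiplicative.toAdd (δ j)) = 0 := by
    rw [← Dg_iterate_toAdd, hiter]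
    rfl
  have hp2 : p ≠ 2 := by rintro rfl; simp [Nat.odd_iff] at hodd
  have h1 : (fwdDiff (1 : ZMod p))^[p-1] (fun j => Multiplicative.toAdd (δ j)) 0 = 0 := by
    have h2 := congrArg (fun v => ((-1 : ℤ) ^ (p-1)) • v) h0
    simp only [smul_smul, ← pow_add, smul_zero] at h2
    rw [Even.neg_one_pow ⟨p-1, rfl⟩, one_smul] at h2
    exact congrFun h2 0
  rw [fwdDiff_iter_eq_sum_shift] at h1
  have hp1 : p - 1 + 1 = p := Nat.succ_pred_eq_of_pos hp.pos
  rw [hp1] at h1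
  have hsum : ∑ k ∈ Finset.range p,
      ((-1 : ℤ) ^ (p - 1 - k) * ((p-1).choose k : ℤ)) •
        Multiplicative.toAdd (δ ((0 : ZMod p) + k • (1 : ZMod p))) = 1 := by
    rw [Finset.sum_eq_single 0]
    · have : Even (p - 1) := hp.even_sub_one hp2
      simp [hδ, this.neg_one_pow]
    · intro k hk hk0
      have hkp : (k : ZMod p) ≠ 0 := by
        rw [Ne, ZMod.natCast_eq_zero_iff]
        intro hdvd
        exact hk0 (Nat.eq_zero_of_dvd_of_lt hdvd (Finset.mem_range.mp hk))
      simp [hδ, hkp]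
    · intro h
      exact absurd (Finset.mem_range.mpr hp.pos) h
  rw [hsum] at h1
  exact one_ne_zero h1

end Aux

/-- the regular wreath product `W = C_p ≀ C_p` (`p` odd) is not `p`-central of
height `p-1`: `Ω₁(W)` is not contained in `ζ_{p-1}(W)`. -/


theorem wreath_not_pCentral_height
    (hp : p.Prime) (hodd : Odd p) :
    ¬ Omega p 1 (WreathCpCp p) ≤ upperCentralSeries (WreathCpCp p) (p - 1) := by
  intro hle
  exact key p hp hodd hle
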